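/- Let u, v be nonnegative rationals with u + v > 1, and let A(u,v) ⊆ k[t₁,t₂,x,y,z] be the graded subspace whose n-th component is spanned by all monomials t₁^{nu} t₂^{nv} x^k y^l z^m with nu, nv ∈ ℤ_{≥0} and n(u+v−1) = 2k + 3l + 4m. Then the assignment sending such a monomial to x^k y^l z^m defines an isomorphism of graded algebras from A(u,v) onto the Veronese subalgebra of k[x,y,z] (with deg x = 2, deg y = 3, deg z = 4) consisting of all elements whose degree is a nonnegative integer multiple of n₀(u+v−1), where n₀ is the least positive integer with n₀u, n₀v, n₀(u+v−1)/1 giving integer exponents. -/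

import Mathlib

open MvPolynomial

/-- The `n`-th graded component of `A(u,v)` inside `k[t₁,t₂,x,y,z]`: the `k`-span of the
monomials `t₁^{nu} t₂^{nv} x^K y^l z^m` with `nu, nv ∈ ℤ_{≥0}` and
`n(u+v−1) = 2K + 3l + 4m`. -/
noncomputable def stmt10Acomp (k : Type*) [Field k] (u v : ℚ) (n : ℕ) :
    Submodule k (MvPolynomial (Fin 5) k) :=
  Submodule.span k
    {P | ∃ i j K l m : ℕ, (i : ℚ) = n * u ∧ (j : ℚ) = n * v ∧
      (n : ℚ) * (u + v - 1) = 2 * K + 3 * l + 4 * m ∧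
      P = X 0 ^ i * X 1 ^ j * X 2 ^ K * X 3 ^ l * X 4 ^ m}

/-- The span of the allowed monomials of all degrees `n` (the algebra `A(u,v)`). -/
noncomputable def stmt10A (k : Type*) [Field k] (u v : ℚ) :
    Submodule k (MvPolynomial (Fin 5) k) :=
  ⨆ n : ℕ, stmt10Acomp k u v n

/-- The graded component of degree `d ∈ ℚ` of `k[x,y,z]` with `deg x = 2`, `deg y = 3`,
`deg z = 4`: the span of the monomials `x^K y^l z^m` with `2K + 3l + 4m = d`. -/
noncomputable def stmt10Vcomp (k : Type*) [Field k] (d : ℚ) :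
    Submodule k (MvPolynomial (Fin 3) k) :=
  Submodule.span k
    {P | ∃ K l m : ℕ, (2 * K + 3 * l + 4 * m : ℚ) = d ∧
      P = X 0 ^ K * X 1 ^ l * X 2 ^ m}

/-- The Veronese subalgebra of `k[x,y,z]` (`deg x = 2, deg y = 3, deg z = 4`) consisting
of the components whose degree is a nonnegative integer multiple of `d`. -/
noncomputable def stmt10Ver (k : Type*) [Field k] (d : ℚ) :
    Submodule k (MvPolynomial (Fin 3) k) :=
  ⨆ c : ℕ, stmt10Vcomp k (c * d)

noncomputable def stmt10fmap (u v : ℚ) (d : Fin 3 →₀ ℕ) : Fin 5 →₀ ℕ :=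
  Finsupp.single 0 (⌊(2 * d 0 + 3 * d 1 + 4 * d 2 : ℚ) * u / (u + v - 1)⌋.toNat) +
  Finsupp.single 1 (⌊(2 * d 0 + 3 * d 1 + 4 * d 2 : ℚ) * v / (u + v - 1)⌋.toNat) +
  Finsupp.single 2 (d 0) + Finsupp.single 3 (d 1) + Finsupp.single 4 (d 2)

noncomputable def stmt10Theta (k : Type*) [Field k] (u v : ℚ) :
    MvPolynomial (Fin 3) k →ₗ[k] MvPolynomial (Fin 5) k :=
  AddMonoidAlgebra.mapDomainLinearMap k k (stmt10fmap u v)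

lemma stmt10Theta_monomial (k : Type*) [Field k] (u v : ℚ) (d : Fin 3 →₀ ℕ) (a : k) :
    stmt10Theta k u v (monomial d a) = monomial (stmt10fmap u v d) a :=
  AddMonoidAlgebra.mapDomainLinearMap_single _ _ _

lemma stmt10fmap_eq (u v : ℚ) (huv : 1 < u + v) (n i j K l m : ℕ)
    (hi : (i : ℚ) = n * u) (hj : (j : ℚ) = n * v)
    (hd : (n : ℚ) * (u + v - 1) = 2 * K + 3 * l + 4 * m) :
    stmt10fmap u v (Finsupp.single 0 K + Finsupp.single 1 l + Finsupp.single 2 m) =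
      Finsupp.single 0 i + Finsupp.single 1 j + Finsupp.single 2 K +
        Finsupp.single 3 l + Finsupp.single 4 m := by
  have h0 : (u + v - 1) ≠ 0 := by linarith
  set d : Fin 3 →₀ ℕ := Finsupp.single 0 K + Finsupp.single 1 l + Finsupp.single 2 m with hdd
  have hd0 : d 0 = K := by simp [hdd, Finsupp.single_apply]
  have hd1 : d 1 = l := by simp [hdd, Finsupp.single_apply]
  have hd2 : d 2 = m := by simp [hdd, Finsupp.single_apply]
  unfold stmt10fmap
  rw [hd0, hd1, hd2]
  have hD : (2 * K + 3 * l + 4 * m : ℚ) = (n : ℚ) * (u + v - 1) := hd.symm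
  rw [hD]
  have hu' : (n : ℚ) * (u + v - 1) * u / (u + v - 1) = (i : ℚ) := by
    rw [hi]; field_simp
  have hv' : (n : ℚ) * (u + v - 1) * v / (u + v - 1) = (j : ℚ) := by
    rw [hj]; field_simp
  rw [hu', hv', Int.floor_natCast, Int.floor_natCast, Int.toNat_natCast, Int.toNat_natCast]

lemma stmt10mono3 (k : Type*) [Field k] (K l m : ℕ) :
    (X 0 ^ K * X 1 ^ l * X 2 ^ m : MvPolynomial (Fin 3) k) =
      monomial (Finsupp.single 0 K + Finsupp.single 1 l + Finsupp.single 2 m) 1 := by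
  rw [X_pow_eq_monomial, X_pow_eq_monomial, X_pow_eq_monomial, monomial_mul, monomial_mul]
  norm_num

lemma stmt10mono5 (k : Type*) [Field k] (i j K l m : ℕ) :
    (X 0 ^ i * X 1 ^ j * X 2 ^ K * X 3 ^ l * X 4 ^ m : MvPolynomial (Fin 5) k) =
      monomial (Finsupp.single 0 i + Finsupp.single 1 j + Finsupp.single 2 K +
        Finsupp.single 3 l + Finsupp.single 4 m) 1 := by
  rw [X_pow_eq_monomial, X_pow_eq_monomial, X_pow_eq_monomial, X_pow_eq_monomial,
    X_pow_eq_monomial, monomial_mul, monomial_mul, monomial_mul, monomial_mul]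
  norm_num

lemma stmt10Phi_monomial (k : Type*) [Field k] (i j K l m : ℕ) :
    (aeval ![1, 1, X 0, X 1, X 2] : MvPolynomial (Fin 5) k →ₐ[k] MvPolynomial (Fin 3) k)
      (X 0 ^ i * X 1 ^ j * X 2 ^ K * X 3 ^ l * X 4 ^ m) = X 0 ^ K * X 1 ^ l * X 2 ^ m := by
  simp [map_mul, map_pow]

lemma stmt10natQ (q : ℚ) (z : ℤ) (hz : (z : ℚ) = q) (hq : 0 ≤ q) :
    ∃ i : ℕ, (i : ℚ) = q := by
  have hz0 : 0 ≤ z := by exact_mod_cast hz ▸ hq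
  refine ⟨z.toNat, ?_⟩
  have := Int.toNat_of_nonneg hz0
  rw [← hz]
  exact_mod_cast congrArg (fun t : ℤ => (t : ℚ)) this

lemma stmt10dvd (u v : ℚ) (hu : 0 ≤ u) (hv : 0 ≤ v) (n₀ : ℕ) (hn₀pos : 0 < n₀)
    (hn₀int : ∃ i j : ℕ, (i : ℚ) = n₀ * u ∧ (j : ℚ) = n₀ * v)
    (hn₀min : ∀ n : ℕ, 0 < n → (∃ i j : ℕ, (i : ℚ) = n * u ∧ (j : ℚ) = n * v) → n₀ ≤ n)
    (n : ℕ) (hn : ∃ i j : ℕ, (i : ℚ) = n * u ∧ (j : ℚ) = n * v) : n₀ ∣ n := by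
  rcases Nat.eq_zero_or_pos n with rfl | hnpos
  · exact dvd_zero _
  obtain ⟨i, j, hi, hj⟩ := hn
  obtain ⟨i₀, j₀, hi₀, hj₀⟩ := hn₀int
  set g : ℕ := Nat.gcd n₀ n with hg
  have gpos : 0 < g := Nat.gcd_pos_of_pos_right _ hnpos
  set a : ℤ := Nat.gcdA n₀ n with ha
  set b : ℤ := Nat.gcdB n₀ n with hb
  have hbez : (g : ℤ) = n₀ * a + n * b := Nat.gcd_eq_gcd_ab n₀ n
  have hbezQ : (g : ℚ) = (n₀ : ℚ) * (a : ℚ) + (n : ℚ) * (b : ℚ) := by exact_mod_cast hbez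
  have hgu : ((a * i₀ + b * i : ℤ) : ℚ) = (g : ℚ) * u := by
    push_cast
    linear_combination (a : ℚ) * hi₀ + (b : ℚ) * hi - u * hbezQ
  have hgv : ((a * j₀ + b * j : ℤ) : ℚ) = (g : ℚ) * v := by
    push_cast
    linear_combination (a : ℚ) * hj₀ + (b : ℚ) * hj - v * hbezQ
  obtain ⟨i', hi'⟩ := stmt10natQ _ _ hgu (by positivity)
  obtain ⟨j', hj'⟩ := stmt10natQ _ _ hgv (by positivity)
  have h1 : n₀ ≤ g := hn₀min g gpos ⟨i', j', hi', hj'⟩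
  have h2 : g ≤ n₀ := Nat.le_of_dvd hn₀pos (Nat.gcd_dvd_left _ _)
  have : g = n₀ := le_antisymm h2 h1
  exact this ▸ Nat.gcd_dvd_right n₀ n


/-- For nonnegative rationals `u, v` with `u + v > 1`, the algebra map
`Φ : k[t₁,t₂,x,y,z] → k[x,y,z]`, `t₁, t₂ ↦ 1`, `x,y,z ↦ x,y,z` (which on the allowed
monomials is exactly `t₁^{nu} t₂^{nv} x^K y^l z^m ↦ x^K y^l z^m`) restricts to an
isomorphism of graded algebras from `A(u,v)` onto the Veronese subalgebra of `k[x,y,z]`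
in degrees divisible by `n₀(u+v−1)`, where `n₀` is the least positive integer such that
`n₀u, n₀v` are (nonnegative) integers: `Φ` is injective on `A(u,v)`, maps the component
of degree `n` (when `nu, nv` are integral) onto the Veronese component of degree
`n(u+v−1)`, and maps `A(u,v)` onto the whole Veronese subalgebra. -/
theorem stmt10 (k : Type*) [Field k] (u v : ℚ) (hu : 0 ≤ u) (hv : 0 ≤ v)
    (huv : 1 < u + v) (n₀ : ℕ) (hn₀pos : 0 < n₀)
    (hn₀int : ∃ i j : ℕ, (i : ℚ) = n₀ * u ∧ (j : ℚ) = n₀ * v)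
    (hn₀min : ∀ n : ℕ, 0 < n → (∃ i j : ℕ, (i : ℚ) = n * u ∧ (j : ℚ) = n * v) → n₀ ≤ n) :
    let Φ : MvPolynomial (Fin 5) k →ₐ[k] MvPolynomial (Fin 3) k :=
      aeval ![1, 1, X 0, X 1, X 2]
    Set.InjOn Φ (stmt10A k u v : Set (MvPolynomial (Fin 5) k)) ∧
      (∀ n : ℕ, (∃ i j : ℕ, (i : ℚ) = n * u ∧ (j : ℚ) = n * v) →
        Submodule.map Φ.toLinearMap (stmt10Acomp k u v n) =
          stmt10Vcomp k ((n : ℚ) * (u + v - 1))) ∧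
      Submodule.map Φ.toLinearMap (stmt10A k u v) =
        stmt10Ver k ((n₀ : ℚ) * (u + v - 1)) := by
  intro Φ
  -- left inverse on A
  have hleft : ∀ P ∈ stmt10A k u v, stmt10Theta k u v (Φ P) = P := by
    have hA : stmt10A k u v =
        Submodule.span k (⋃ n : ℕ, {P | ∃ i j K l m : ℕ, (i : ℚ) = n * u ∧ (j : ℚ) = n * v ∧
          (n : ℚ) * (u + v - 1) = 2 * K + 3 * l + 4 * m ∧
          P = X 0 ^ i * X 1 ^ j * X 2 ^ K * X 3 ^ l * X 4 ^ m}) := by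
      rw [stmt10A, Submodule.span_iUnion]; rfl
    have hle : stmt10A k u v ≤
        LinearMap.eqLocus ((stmt10Theta k u v).comp Φ.toLinearMap) LinearMap.id := by
      rw [hA, Submodule.span_le]
      rintro P hP
      simp only [Set.mem_iUnion, Set.mem_setOf_eq] at hP
      obtain ⟨n, i, j, K, l, m, hi, hj, hd, rfl⟩ := hP
      show stmt10Theta k u v (Φ _) = _
      rw [stmt10Phi_monomial, stmt10mono3, stmt10Theta_monomial,
        stmt10fmap_eq u v huv n i j K l m hi hj hd, ← stmt10mono5]
      rfl
    intro P hP
    exact hle hP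
  -- part 2
  have hcomp : ∀ n : ℕ, (∃ i j : ℕ, (i : ℚ) = n * u ∧ (j : ℚ) = n * v) →
      Submodule.map Φ.toLinearMap (stmt10Acomp k u v n) =
        stmt10Vcomp k ((n : ℚ) * (u + v - 1)) := by
    intro n hn
    rw [stmt10Acomp, Submodule.map_span, stmt10Vcomp]
    congr 1
    ext Q
    constructor
    · rintro ⟨P, ⟨i, j, K, l, m, hi, hj, hd, rfl⟩, rfl⟩
      exact ⟨K, l, m, hd.symm, (stmt10Phi_monomial k i j K l m)⟩
    · rintro ⟨K, l, m, hd, rfl⟩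
      obtain ⟨i, j, hi, hj⟩ := hn
      exact ⟨X 0 ^ i * X 1 ^ j * X 2 ^ K * X 3 ^ l * X 4 ^ m,
        ⟨i, j, K, l, m, hi, hj, hd.symm, rfl⟩, stmt10Phi_monomial k i j K l m⟩
  refine ⟨fun P hP Q hQ h => by rw [← hleft P hP, ← hleft Q hQ, h], hcomp, ?_⟩
  -- part 3
  rw [stmt10A, Submodule.map_iSup, stmt10Ver]
  apply le_antisymm
  · apply iSup_le
    intro n
    by_cases hn : ∃ i j : ℕ, (i : ℚ) = n * u ∧ (j : ℚ) = n * v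
    · obtain ⟨c, rfl⟩ := stmt10dvd u v hu hv n₀ hn₀pos hn₀int hn₀min n hn
      rw [hcomp _ hn]
      apply le_iSup_of_le c
      have : ((n₀ * c : ℕ) : ℚ) * (u + v - 1) = (c : ℚ) * ((n₀ : ℚ) * (u + v - 1)) := by
        push_cast; ring
      rw [this]
    · have hempty : stmt10Acomp k u v n = ⊥ := by
        rw [stmt10Acomp]
        convert Submodule.span_empty
        ext P
        simp only [Set.mem_setOf_eq, Set.mem_empty_iff_false, iff_false]
        rintro ⟨i, j, K, l, m, hi, hj, -, -⟩
        exact hn ⟨i, j, hi, hj⟩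
      rw [hempty]
      simp
  · apply iSup_le
    intro c
    obtain ⟨i₀, j₀, hi₀, hj₀⟩ := hn₀int
    have hint : ∃ i j : ℕ, (i : ℚ) = (n₀ * c : ℕ) * u ∧ (j : ℚ) = (n₀ * c : ℕ) * v :=
      ⟨i₀ * c, j₀ * c, by push_cast; linear_combination (c : ℚ) * hi₀,
        by push_cast; linear_combination (c : ℚ) * hj₀⟩
    have h := hcomp (n₀ * c) hint
    have hdeg : ((n₀ * c : ℕ) : ℚ) * (u + v - 1) = (c : ℚ) * ((n₀ : ℚ) * (u + v - 1)) := by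
      push_cast; ring
    rw [hdeg] at h
    rw [← h]
    exact le_iSup (fun n => Submodule.map Φ.toLinearMap (stmt10Acomp k u v n)) (n₀ * c)
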